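/- Let X be a compact Hausdorff topological space and let p be a projection in M_n(C(X)), the n×n matrices over the C*-algebra C(X) of continuous complex-valued functions on X. Then the following are equivalent: (i) e₁₁ ≾ p, i.e., there exists v ∈ M_n(C(X)) with v*v = e₁₁ and vv* ≤ p; (ii) there exists a continuous map s : X → ℂⁿ such that p(x)s(x) = s(x) and s(x) ≠ 0 for all x ∈ X (a nowhere-zero continuous section of the vector bundle ξ_p associated to p). -/

import Mathlib

open Matrix ComplexOrder

/-- For a compact Hausdorff space `X` and a projection
`p ∈ Mₙ(C(X))` (represented as a continuous matrix-valued function), the constant matrix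
unit `e₁₁` is Murray–von Neumann subequivalent to `p` (i.e. there is `v` with `v*v = e₁₁`
and `vv* ≤ p`, positivity being pointwise positive semidefiniteness) if and only if the
vector bundle `ξ_p` admits a nowhere-zero continuous section. -/

lemma fw_pt {n : ℕ} (hn : 0 < n) (p v : Matrix (Fin n) (Fin n) ℂ)
    (h1 : p * p = p) (h2 : pᴴ = p)
    (hv1 : vᴴ * v = Matrix.single ⟨0, hn⟩ ⟨0, hn⟩ 1)
    (hv2 : (p - v * vᴴ).PosSemidef) :
    p *ᵥ (fun i => v i ⟨0, hn⟩) = (fun i => v i ⟨0, hn⟩) ∧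
      (fun i => v i ⟨0, hn⟩) ≠ 0 := by
  set z : Fin n := ⟨0, hn⟩
  set s : Fin n → ℂ := fun i => v i z with hs
  have hnorm : star s ⬝ᵥ s = 1 := by
    have := congrFun (congrFun hv1 z) z
    simp only [Matrix.mul_apply, Matrix.conjTranspose_apply, Matrix.single, Matrix.of_apply] at this
    simpa [dotProduct, hs, mul_comm] using this
  have hw : vᴴ *ᵥ s = fun j => if j = z then 1 else 0 := by
    funext j
    have := congrFun (congrFun hv1 j) z
    simp only [Matrix.mul_apply, Matrix.single, Matrix.of_apply] at this
    simp only [Matrix.mulVec, dotProduct, hs]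
    rw [show (∑ i, vᴴ j i * v i z) = ∑ i, vᴴ j i * v i z from rfl] at this
    rw [this]
    by_cases h : j = z <;> simp [h, eq_comm]
  have hq : star s ⬝ᵥ ((v * vᴴ) *ᵥ s) = 1 := by
    rw [← Matrix.mulVec_mulVec, Matrix.dotProduct_mulVec]
    have hsv : star s ᵥ* v = star (vᴴ *ᵥ s) := by
      rw [Matrix.star_mulVec, Matrix.conjTranspose_conjTranspose]
    rw [hsv, hw]
    simp [dotProduct]
  set α : ℂ := star s ⬝ᵥ (p *ᵥ s) with hα
  have hge : 1 ≤ α := by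
    have h0 := hv2.dotProduct_mulVec_nonneg s
    rw [Matrix.sub_mulVec, dotProduct_sub, hq] at h0
    exact sub_nonneg.mp h0
  set t : Fin n → ℂ := s - p *ᵥ s with ht
  have hts : star t ⬝ᵥ t = 1 - α := by
    have e1 : (star s ᵥ* p) ⬝ᵥ s = α := (Matrix.dotProduct_mulVec _ _ _).symm
    have e2 : (star s ᵥ* p) ⬝ᵥ (p *ᵥ s) = α := by
      rw [← Matrix.dotProduct_mulVec, Matrix.mulVec_mulVec, h1]
    have e3 : star (p *ᵥ s) = star s ᵥ* p := by
      rw [Matrix.star_mulVec, h2]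
    rw [ht, star_sub, sub_dotProduct, dotProduct_sub, dotProduct_sub, hnorm, e3, e1, e2]
    ring
  have ht0 : t = 0 := by
    rw [← dotProduct_star_self_eq_zero (v := t)]
    have h1' : 0 ≤ star t ⬝ᵥ t := dotProduct_star_self_nonneg t
    rw [hts] at h1' ⊢
    have : α ≤ 1 := sub_nonneg.mp (by simpa using h1')
    have : α = 1 := le_antisymm this hge
    rw [this]; ring
  constructor
  · have := sub_eq_zero.mp ht0
    exact this.symm
  · intro h
    rw [h] at hnorm
    simp at hnorm

lemma rev_pt {n : ℕ} (hn : 0 < n) (p : Matrix (Fin n) (Fin n) ℂ)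
    (h1 : p * p = p) (h2 : pᴴ = p) (u : Fin n → ℂ)
    (hu : p *ᵥ u = u) (hu1 : star u ⬝ᵥ u = 1) :
    (Matrix.of fun i j => if j = (⟨0, hn⟩ : Fin n) then u i else 0)ᴴ *
        (Matrix.of fun i j => if j = (⟨0, hn⟩ : Fin n) then u i else 0) =
      Matrix.single ⟨0, hn⟩ ⟨0, hn⟩ 1 ∧
    (p - (Matrix.of fun i j => if j = (⟨0, hn⟩ : Fin n) then u i else 0) *
        (Matrix.of fun i j => if j = (⟨0, hn⟩ : Fin n) then u i else 0)ᴴ).PosSemidef := by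
  set z : Fin n := ⟨0, hn⟩
  set v : Matrix (Fin n) (Fin n) ℂ := Matrix.of fun i j => if j = z then u i else 0 with hv
  have hvv : v * vᴴ = Matrix.vecMulVec u (star u) := by
    ext i k
    simp [Matrix.mul_apply, hv, Matrix.vecMulVec_apply, Matrix.conjTranspose_apply,
      apply_ite, Finset.sum_ite_eq', mul_comm]
  constructor
  · ext j k
    simp only [Matrix.mul_apply, Matrix.conjTranspose_apply, hv, Matrix.of_apply,
      Matrix.single, Matrix.of_apply]
    by_cases hj : j = z <;> by_cases hk : k = z
    · simpa [hj, hk, dotProduct] using hu1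
    · simp [hj, hk, if_neg (show ¬ z = k from fun h => hk h.symm)]
    · simp [hj, hk, if_neg (show ¬ z = j from fun h => hj h.symm)]
    · simp [hj, hk, if_neg (show ¬ (z = j ∧ z = k) from fun h => hj h.1.symm)]
  · rw [hvv]
    set q : Matrix (Fin n) (Fin n) ℂ := Matrix.vecMulVec u (star u) with hq
    have hqh : qᴴ = q := by
      ext i k; simp [hq, Matrix.vecMulVec_apply, Matrix.conjTranspose_apply, mul_comm]
    have hpq : p * q = q := by
      ext i k
      simp only [Matrix.mul_apply, hq, Matrix.vecMulVec_apply]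
      have huu : ∑ x, p i x * u x = u i := by
        have := congrFun hu i
        simpa [Matrix.mulVec, dotProduct] using this
      calc ∑ x, p i x * (u x * star u k) = (∑ x, p i x * u x) * star u k := by
            rw [Finset.sum_mul]; exact Finset.sum_congr rfl fun _ _ => by ring
        _ = u i * star u k := by rw [huu]
    have hqp : q * p = q := by
      have : (p * q)ᴴ = qᴴ := by rw [hpq]
      rwa [Matrix.conjTranspose_mul, hqh, h2] at this
    have hqq : q * q = q := by
      ext i k
      simp only [Matrix.mul_apply, hq, Matrix.vecMulVec_apply]
      have : ∑ j, u i * star u j * (u j * star u k)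
          = u i * star u k * (star u ⬝ᵥ u) := by
        simp only [dotProduct, Finset.mul_sum]
        exact Finset.sum_congr rfl fun _ _ => by ring
      rw [this, hu1, mul_one]
    have key : p - q = (p - q)ᴴ * (p - q) := by
      have hherm : (p - q)ᴴ = p - q := by rw [Matrix.conjTranspose_sub, h2, hqh]
      rw [hherm, Matrix.sub_mul, Matrix.mul_sub, Matrix.mul_sub, h1, hpq, hqp, hqq]
      abel
    rw [key]
    exact Matrix.posSemidef_conjTranspose_mul_self _

theorem stmt_4 (X : Type*) [TopologicalSpace X] [CompactSpace X] [T2Space X]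
    (n : ℕ) (hn : 0 < n)
    (p : X → Matrix (Fin n) (Fin n) ℂ) (hp : Continuous p)
    (hproj : ∀ x, p x * p x = p x ∧ (p x)ᴴ = p x) :
    (∃ v : X → Matrix (Fin n) (Fin n) ℂ, Continuous v ∧
        (∀ x, (v x)ᴴ * v x = Matrix.single ⟨0, hn⟩ ⟨0, hn⟩ 1) ∧
        (∀ x, (p x - v x * (v x)ᴴ).PosSemidef)) ↔
    (∃ s : X → Fin n → ℂ, Continuous s ∧ ∀ x, p x *ᵥ s x = s x ∧ s x ≠ 0) := by
  constructor
  · rintro ⟨v, hvc, hv1, hv2⟩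
    exact ⟨fun x i => v x i ⟨0, hn⟩,
      continuous_pi fun i => hvc.matrix_elem i ⟨0, hn⟩,
      fun x => fw_pt hn (p x) (v x) (hproj x).1 (hproj x).2 (hv1 x) (hv2 x)⟩
  · rintro ⟨s, hsc, hs⟩
    set z : Fin n := ⟨0, hn⟩
    set S : X → ℝ := fun x => ∑ i, Complex.normSq (s x i) with hSdef
    have hSpos : ∀ x, 0 < S x := by
      intro x
      obtain ⟨i, hi⟩ : ∃ i, s x i ≠ 0 := by
        by_contra h
        push_neg at h
        exact (hs x).2 (funext h)
      exact Finset.sum_pos' (fun j _ => Complex.normSq_nonneg _)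
        ⟨i, Finset.mem_univ i, Complex.normSq_pos.mpr hi⟩
    set r : X → ℝ := fun x => Real.sqrt (S x) with hrdef
    have hrpos : ∀ x, 0 < r x := fun x => Real.sqrt_pos.mpr (hSpos x)
    set u : X → Fin n → ℂ := fun x i => (r x : ℂ)⁻¹ * s x i with hudef
    have hrc : Continuous fun x => (r x : ℂ) := by
      refine Complex.continuous_ofReal.comp ?_
      exact Real.continuous_sqrt.comp
        (continuous_finset_sum _ fun i _ =>
          Complex.continuous_normSq.comp ((continuous_apply i).comp hsc))
    have huc : Continuous u := by
      refine continuous_pi fun i => ?_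
      exact (hrc.inv₀ fun x => by
        exact_mod_cast Complex.ofReal_ne_zero.mpr (hrpos x).ne').mul
        ((continuous_apply i).comp hsc)
    have hu : ∀ x, p x *ᵥ u x = u x := by
      intro x
      have : u x = (r x : ℂ)⁻¹ • s x := by funext i; simp [hudef, Pi.smul_apply, smul_eq_mul]
      rw [this, Matrix.mulVec_smul, (hs x).1]
    have hu1 : ∀ x, star (u x) ⬝ᵥ u x = 1 := by
      intro x
      have hsum : ∑ i, (starRingEnd ℂ) (s x i) * s x i = (S x : ℂ) := by
        rw [hSdef]
        push_cast
        exact Finset.sum_congr rfl fun i _ => (Complex.normSq_eq_conj_mul_self).symm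
      have : star (u x) ⬝ᵥ u x
          = ((r x : ℂ)⁻¹ * (r x : ℂ)⁻¹) * ∑ i, (starRingEnd ℂ) (s x i) * s x i := by
        simp only [dotProduct, hudef, Pi.star_apply, star_mul', Complex.star_def,
          Complex.conj_ofReal, map_inv₀, Finset.mul_sum]
        exact Finset.sum_congr rfl fun i _ => by ring
      rw [this, hsum, ← Complex.ofReal_inv, ← Complex.ofReal_mul, ← Complex.ofReal_mul,
        ← mul_inv, hrdef, Real.mul_self_sqrt (hSpos x).le,
        inv_mul_cancel₀ (hSpos x).ne', Complex.ofReal_one]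
    refine ⟨fun x => Matrix.of fun i j => if j = z then u x i else 0, ?_, ?_, ?_⟩
    · refine continuous_matrix fun i j => ?_
      by_cases h : j = z
      · exact (((continuous_apply i).comp huc : Continuous fun a => u a i).congr fun x => by simp [h])
      · simpa [h] using continuous_const (y := (0 : ℂ))
    · exact fun x => (rev_pt hn (p x) (hproj x).1 (hproj x).2 (u x) (hu x) (hu1 x)).1
    · exact fun x => (rev_pt hn (p x) (hproj x).1 (hproj x).2 (u x) (hu x) (hu1 x)).2
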